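/- Let X be a Hermitian operator in M_m ⊗ M_n with exactly two distinct eigenvalues λ_1 > λ_2, and let P⁻ be the orthogonal projection onto the λ_2-eigenspace. Then X is k-block positive if and only if ‖P⁻‖_{S(k)} ≤ λ_1 / (λ_1 − λ_2). -/

import Mathlib

open scoped BigOperators

noncomputable section

/-- Elementary tensor of two vectors. -/
def tens {m n : ℕ} (a : Fin m → ℂ) (b : Fin n → ℂ) : Fin m × Fin n → ℂ :=
  fun p => a p.1 * b p.2

/-- Inner product `⟨w|v⟩`, conjugate-linear in the first argument. -/
def ip {ι : Type} [Fintype ι] (w v : ι → ℂ) : ℂ :=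
  ∑ i, (starRingEnd ℂ) (w i) * v i

/-- Euclidean norm. -/
def nrm {ι : Type} [Fintype ι] (v : ι → ℂ) : ℝ :=
  Real.sqrt (∑ i, Complex.normSq (v i))

/-- Schmidt rank at most `k`: `v` is a sum of `k` elementary tensors. -/
def SRle {m n : ℕ} (k : ℕ) (v : Fin m × Fin n → ℂ) : Prop :=
  ∃ (a : Fin k → Fin m → ℂ) (b : Fin k → Fin n → ℂ),
    v = fun p => ∑ l, a l p.1 * b l p.2

/-- The `s(k)`-vector norm. -/
def snorm {m n : ℕ} (k : ℕ) (v : Fin m × Fin n → ℂ) : ℝ :=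
  sSup { r : ℝ | ∃ w : Fin m × Fin n → ℂ, nrm w = 1 ∧ SRle k w ∧ r = ‖ip w v‖ }

/-- The `S(k)`-operator norm. -/
def Snorm {m n : ℕ} (k : ℕ) (X : Matrix (Fin m × Fin n) (Fin m × Fin n) ℂ) : ℝ :=
  sSup { r : ℝ | ∃ v w : Fin m × Fin n → ℂ, nrm v = 1 ∧ nrm w = 1 ∧ SRle k v ∧ SRle k w ∧
    r = ‖ip w (X.mulVec v)‖ }

/-- `k`-block positivity: `⟨v|X|v⟩ ≥ 0` for all unit vectors of Schmidt rank at most `k`. -/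
def kBlockPos {m n : ℕ} (k : ℕ) (X : Matrix (Fin m × Fin n) (Fin m × Fin n) ℂ) : Prop :=
  ∀ v : Fin m × Fin n → ℂ, nrm v = 1 → SRle k v → 0 ≤ (ip v (X.mulVec v)).re

namespace TwoEig

variable {ι : Type} [Fintype ι]

lemma nrm_nonneg (v : ι → ℂ) : 0 ≤ nrm v := Real.sqrt_nonneg _

lemma nrm_sq (v : ι → ℂ) : nrm v ^ 2 = ∑ i, Complex.normSq (v i) :=
  Real.sq_sqrt (Finset.sum_nonneg fun i _ => Complex.normSq_nonneg _)

lemma ip_self (v : ι → ℂ) : ip v v = ((∑ i, Complex.normSq (v i) : ℝ) : ℂ) := by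
  simp only [ip]
  push_cast
  refine Finset.sum_congr rfl fun i _ => ?_
  rw [mul_comm, Complex.mul_conj]

lemma ip_eq_inner (w v : ι → ℂ) :
    ip w v = inner (𝕜 := ℂ) ((WithLp.equiv 2 (ι → ℂ)).symm w) ((WithLp.equiv 2 (ι → ℂ)).symm v) := by
  simp [ip, PiLp.inner_apply, RCLike.inner_apply]
  exact Finset.sum_congr rfl fun i _ => mul_comm _ _

lemma nrm_eq_norm (v : ι → ℂ) : nrm v = ‖(WithLp.equiv 2 (ι → ℂ)).symm v‖ := by
  rw [EuclideanSpace.norm_eq]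
  unfold nrm
  congr 1
  refine Finset.sum_congr rfl fun i _ => ?_
  simp [Complex.sq_norm]

lemma abs_ip_le (w v : ι → ℂ) : ‖ip w v‖ ≤ nrm w * nrm v := by
  rw [ip_eq_inner, nrm_eq_norm, nrm_eq_norm]
  simpa using
    norm_inner_le_norm (𝕜 := ℂ) ((WithLp.equiv 2 (ι → ℂ)).symm w) ((WithLp.equiv 2 (ι → ℂ)).symm v)

lemma ip_dot (w v : ι → ℂ) : ip w v = dotProduct (star w) v := by
  simp [ip, dotProduct]

lemma ip_proj {P : Matrix ι ι ℂ} (hH : P.IsHermitian) (hI : P * P = P) (w v : ι → ℂ) :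
    ip w (P.mulVec v) = ip (P.mulVec w) (P.mulVec v) := by
  calc ip w (P.mulVec v) = dotProduct (star w) ((P * P).mulVec v) := by
        rw [ip_dot, hI]
    _ = dotProduct (star w) (P.mulVec (P.mulVec v)) := by rw [Matrix.mulVec_mulVec]
    _ = dotProduct (Matrix.vecMul (star w) P) (P.mulVec v) := by
        rw [Matrix.dotProduct_mulVec]
    _ = dotProduct (star (P.mulVec w)) (P.mulVec v) := by
        rw [show Matrix.vecMul (star w) P = star (P.mulVec w) from by
          rw [Matrix.star_mulVec, hH]]
    _ = ip (P.mulVec w) (P.mulVec v) := (ip_dot _ _).symm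

end TwoEig

open TwoEig

/-- Let `X = λ₁·P⁺ + λ₂·P⁻` be a Hermitian operator in `M_m ⊗ M_n` with
exactly two distinct eigenvalues `λ₁ > λ₂`, where `P⁻` is the orthogonal projection onto the
`λ₂`-eigenspace (and `P⁺ = 1 − P⁻`).  Then `X` is `k`-block positive if and only if
`‖P⁻‖_{S(k)} ≤ λ₁ / (λ₁ − λ₂)`. -/
theorem two_eigenvalue_kBlockPos_iff (m n k : ℕ) (hk : 1 ≤ k) (lam1 lam2 : ℝ)
    (hlam : lam2 < lam1)
    (Pminus : Matrix (Fin m × Fin n) (Fin m × Fin n) ℂ)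
    (hPherm : Pminus.IsHermitian) (hPidem : Pminus * Pminus = Pminus)
    (hP0 : Pminus ≠ 0) (hP1 : Pminus ≠ 1) :
    kBlockPos k ((lam1 : ℂ) • ((1 : Matrix (Fin m × Fin n) (Fin m × Fin n) ℂ) - Pminus) +
        (lam2 : ℂ) • Pminus) ↔
      Snorm k Pminus ≤ lam1 / (lam1 - lam2) := by
  classical
  have hden : (0:ℝ) < lam1 - lam2 := sub_pos.mpr hlam
  set c := lam1 / (lam1 - lam2) with hc
  set d : (Fin m × Fin n → ℂ) → ℝ :=
    fun v => ∑ i, Complex.normSq ((Pminus.mulVec v) i) with hd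
  have hdnn : ∀ v, 0 ≤ d v := fun v =>
    Finset.sum_nonneg fun i _ => Complex.normSq_nonneg _
  have hdip : ∀ v, ip v (Pminus.mulVec v) = ((d v : ℝ) : ℂ) := by
    intro v
    rw [ip_proj hPherm hPidem, ip_self]
  have hdsq : ∀ v, nrm (Pminus.mulVec v) = Real.sqrt (d v) := fun v => rfl
  have hPle : ∀ v, nrm (Pminus.mulVec v) ≤ nrm v := by
    intro v
    have h1 : ‖ip v (Pminus.mulVec v)‖ ≤ nrm v * nrm (Pminus.mulVec v) :=
      abs_ip_le _ _
    have h2 : ‖ip v (Pminus.mulVec v)‖ = nrm (Pminus.mulVec v) ^ 2 := by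
      rw [hdip, Complex.norm_of_nonneg (hdnn v), nrm_sq]
    rw [h2] at h1
    nlinarith [nrm_nonneg v, nrm_nonneg (Pminus.mulVec v)]
  -- value of the quadratic form
  have hval : ∀ v : Fin m × Fin n → ℂ, nrm v = 1 →
      (ip v (((lam1 : ℂ) • ((1 : Matrix (Fin m × Fin n) (Fin m × Fin n) ℂ) - Pminus) +
        (lam2 : ℂ) • Pminus).mulVec v)).re = lam1 - (lam1 - lam2) * d v := by
    intro v hv
    have hip1 : ip v v = 1 := by
      rw [ip_self]
      have h := nrm_sq v
      rw [hv] at h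
      norm_num at h
      rw [← h]
      norm_num
    have hexp : ip v (((lam1 : ℂ) • ((1 : Matrix (Fin m × Fin n) (Fin m × Fin n) ℂ) - Pminus) +
        (lam2 : ℂ) • Pminus).mulVec v)
        = (lam1 : ℂ) * ip v v - ((lam1 : ℂ) - (lam2 : ℂ)) * ip v (Pminus.mulVec v) := by
      simp only [ip, Matrix.add_mulVec, Matrix.smul_mulVec, Matrix.sub_mulVec,
        Matrix.one_mulVec, Pi.add_apply, Pi.smul_apply, Pi.sub_apply, smul_eq_mul,
        Finset.mul_sum, ← Finset.sum_sub_distrib]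
      refine Finset.sum_congr rfl fun i _ => ?_
      ring
    rw [hexp, hip1, hdip]
    have : (lam1 : ℂ) * 1 - ((lam1 : ℂ) - (lam2 : ℂ)) * ((d v : ℝ) : ℂ)
        = ((lam1 - (lam1 - lam2) * d v : ℝ) : ℂ) := by push_cast; ring
    rw [this, Complex.ofReal_re]
  -- nonempty index type and witness vector
  have hne : Nonempty (Fin m × Fin n) := by
    by_contra h
    rw [not_nonempty_iff] at h
    exact hP0 (by ext i j; exact (h.false i).elim)
  obtain ⟨p0⟩ := hne
  set v0 : Fin m × Fin n → ℂ := fun p => if p = p0 then 1 else 0 with hv0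
  have hv0n : nrm v0 = 1 := by
    have h1 : ∑ p, Complex.normSq (v0 p) = 1 := by
      simp [hv0, apply_ite Complex.normSq]
    rw [nrm, h1, Real.sqrt_one]
  have hv0s : SRle k v0 := by
    have hk0 : 0 < k := hk
    refine ⟨fun l => if l = (⟨0, hk0⟩ : Fin k) then (fun i => if i = p0.1 then 1 else 0) else 0,
      fun _ => fun j => if j = p0.2 then 1 else 0, ?_⟩
    funext p
    simp only [hv0, apply_ite (fun f : Fin m → ℂ => f p.1), Pi.zero_apply, ite_mul, zero_mul,
      Finset.sum_ite_eq', Finset.mem_univ, if_true]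
    obtain ⟨p1, p2⟩ := p
    simp only [Prod.mk.injEq, Prod.ext_iff]
    split_ifs <;> simp_all
  -- diagonal characterization
  have hdiag : kBlockPos k ((lam1 : ℂ) • ((1 : Matrix (Fin m × Fin n) (Fin m × Fin n) ℂ) - Pminus) +
      (lam2 : ℂ) • Pminus) ↔ ∀ v, nrm v = 1 → SRle k v → d v ≤ c := by
    constructor
    · intro h v hv hsr
      have h1 := h v hv hsr
      rw [hval v hv] at h1
      rw [hc, le_div_iff₀ hden]
      nlinarith
    · intro h v hv hsr
      rw [hval v hv]
      have h1 := h v hv hsr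
      rw [hc, le_div_iff₀ hden] at h1
      nlinarith
  rw [hdiag]
  constructor
  · intro hD
    have hc0 : (0:ℝ) ≤ c := le_trans (hdnn v0) (hD v0 hv0n hv0s)
    refine Real.sSup_le ?_ hc0
    rintro r ⟨v, w, hv, hw, hsv, hsw, rfl⟩
    rw [ip_proj hPherm hPidem]
    calc ‖ip (Pminus.mulVec w) (Pminus.mulVec v)‖
        ≤ nrm (Pminus.mulVec w) * nrm (Pminus.mulVec v) := abs_ip_le _ _
      _ = Real.sqrt (d w) * Real.sqrt (d v) := by rw [hdsq, hdsq]
      _ ≤ Real.sqrt c * Real.sqrt c := by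
          apply mul_le_mul (Real.sqrt_le_sqrt (hD w hw hsw)) (Real.sqrt_le_sqrt (hD v hv hsv))
            (Real.sqrt_nonneg _) (Real.sqrt_nonneg _)
      _ = c := Real.mul_self_sqrt hc0
  · intro hS v hv hsv
    have hb : BddAbove { r : ℝ | ∃ v w : Fin m × Fin n → ℂ, nrm v = 1 ∧ nrm w = 1 ∧
        SRle k v ∧ SRle k w ∧ r = ‖ip w (Pminus.mulVec v)‖ } := by
      refine ⟨1, ?_⟩
      rintro r ⟨v', w', hv', hw', _, _, rfl⟩
      rw [ip_proj hPherm hPidem]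
      calc ‖ip (Pminus.mulVec w') (Pminus.mulVec v')‖
          ≤ nrm (Pminus.mulVec w') * nrm (Pminus.mulVec v') := abs_ip_le _ _
        _ ≤ nrm w' * nrm v' := mul_le_mul (hPle w') (hPle v') (nrm_nonneg _) (nrm_nonneg _)
        _ = 1 := by rw [hv', hw', one_mul]
    have hmem : d v ∈ { r : ℝ | ∃ v w : Fin m × Fin n → ℂ, nrm v = 1 ∧ nrm w = 1 ∧
        SRle k v ∧ SRle k w ∧ r = ‖ip w (Pminus.mulVec v)‖ } := by
      refine ⟨v, v, hv, hv, hsv, hsv, ?_⟩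
      rw [hdip, Complex.norm_of_nonneg (hdnn v)]
    exact le_trans (le_csSup hb hmem) hS
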